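/- Let {S_j}_{j=1}^N be an IFS of contractive similitudes on ℝ^d with augmented tree (X, 𝓔). If (X, 𝓔) is of bounded degree, then for every c > 0 there exists ℓ > 0 such that for every n ≥ 0 and every ball B ⊆ ℝ^d of radius c rⁿ, the number of words x ∈ 𝓙_n with K_x ∩ B ≠ ∅ is at most ℓ. -/

import Mathlib

open Metric Filter

namespace HypIFS

/-- Euclidean space `ℝ^d`. -/
abbrev Euc (d : ℕ) := EuclideanSpace ℝ (Fin d)

/-- The distance `dist(A, B)` between two subsets of a metric space. -/
noncomputable def setDist {E : Type*} [PseudoMetricSpace E] (A B : Set E) : ℝ :=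
  sInf (Set.image2 dist A B)

variable {d N : ℕ}

/-- For a word `x = i₁⋯i_k`, the composition `S_x = S_{i₁} ∘ ⋯ ∘ S_{i_k}`. -/
def sWord (S : Fin N → Euc d → Euc d) : List (Fin N) → Euc d → Euc d :=
  fun w => w.foldr (fun i f => S i ∘ f) id

/-- For a word `x = i₁⋯i_k`, the product `r_x = r_{i₁} ⋯ r_{i_k}` of contraction ratios. -/
def rWord (ρ : Fin N → ℝ) (w : List (Fin N)) : ℝ := (w.map ρ).prod

/-- The coding level `𝓙_n = {i₁⋯i_k : r_{i₁⋯i_k} ≤ rⁿ < r_{i₁⋯i_{k−1}}}`,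
with `𝓙_0` consisting of the empty word. -/
def Jlevel (ρ : Fin N → ℝ) (r : ℝ) (n : ℕ) : Set (List (Fin N)) :=
  if n = 0 then {([] : List (Fin N))}
  else {w | rWord ρ w ≤ r ^ n ∧ r ^ n < rWord ρ w.dropLast}

/-- The vertical (parent–child) edge relation: `x ∈ 𝓙_n` is the initial segment
of `y ∈ 𝓙_{n+1}`. -/
def EV (ρ : Fin N → ℝ) (r : ℝ) (x y : List (Fin N)) : Prop :=
  ∃ n : ℕ, x ∈ Jlevel ρ r n ∧ y ∈ Jlevel ρ r (n + 1) ∧ x <+: y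

/-- The horizontal edge relation: `x ≠ y` in the same level `𝓙_n` with
`dist(K_x, K_y) ≤ κ rⁿ`. -/
def EH (S : Fin N → Euc d → Euc d) (ρ : Fin N → ℝ) (r κ : ℝ) (K : Set (Euc d))
    (x y : List (Fin N)) : Prop :=
  ∃ n : ℕ, x ∈ Jlevel ρ r n ∧ y ∈ Jlevel ρ r n ∧ x ≠ y ∧
    setDist (sWord S x '' K) (sWord S y '' K) ≤ κ * r ^ n

/-- The augmented tree `(X, 𝓔)`, `𝓔 = 𝓔_v ∪ 𝓔_h`, as a graph on the word space
(words belonging to no level `𝓙_n` are isolated vertices). -/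
def augIFS (S : Fin N → Euc d → Euc d) (ρ : Fin N → ℝ) (r κ : ℝ) (K : Set (Euc d)) :
    SimpleGraph (List (Fin N)) where
  Adj x y := (EV ρ r x y ∨ EV ρ r y x ∨ EH S ρ r κ K x y ∨ EH S ρ r κ K y x) ∧ x ≠ y
  symm := ⟨by
    rintro x y ⟨h1 | h2 | h3 | h4, hne⟩
    · exact ⟨Or.inr (Or.inl h1), hne.symm⟩
    · exact ⟨Or.inl h2, hne.symm⟩
    · exact ⟨Or.inr (Or.inr (Or.inr h3)), hne.symm⟩
    · exact ⟨Or.inr (Or.inr (Or.inl h4)), hne.symm⟩⟩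
  loopless := ⟨fun x h => h.2 rfl⟩

/-- A graph is of bounded degree if `sup_x deg(x) < ∞`. -/
def BddDeg {V : Type*} (G : SimpleGraph V) : Prop :=
  ∃ M : ℕ, ∀ x : V, {y | G.Adj x y}.Finite ∧ {y | G.Adj x y}.ncard ≤ M

/-! ### Auxiliary lemmas -/

section Auxiliary

variable {d N : ℕ}

lemma rWord_nil (ρ : Fin N → ℝ) : rWord ρ [] = 1 := rfl

lemma rWord_cons (ρ : Fin N → ℝ) (i : Fin N) (w : List (Fin N)) :
    rWord ρ (i :: w) = ρ i * rWord ρ w := by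
  simp [rWord]

lemma rWord_append (ρ : Fin N → ℝ) (a b : List (Fin N)) :
    rWord ρ (a ++ b) = rWord ρ a * rWord ρ b := by
  simp [rWord]

lemma rWord_pos {ρ : Fin N → ℝ} (hρ0 : ∀ j, 0 < ρ j) (w : List (Fin N)) :
    0 < rWord ρ w := by
  induction w with
  | nil => norm_num [rWord]
  | cons i w ih => rw [rWord_cons]; exact mul_pos (hρ0 i) ih

lemma rWord_le_one {ρ : Fin N → ℝ} (hρ0 : ∀ j, 0 < ρ j) (hρ1 : ∀ j, ρ j < 1)
    (w : List (Fin N)) : rWord ρ w ≤ 1 := by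
  induction w with
  | nil => norm_num [rWord]
  | cons i w ih =>
    rw [rWord_cons]
    calc ρ i * rWord ρ w ≤ 1 * 1 :=
          mul_le_mul (hρ1 i).le ih (rWord_pos hρ0 w).le zero_le_one
    _ = 1 := one_mul 1

lemma rWord_le_of_prefix {ρ : Fin N → ℝ} (hρ0 : ∀ j, 0 < ρ j) (hρ1 : ∀ j, ρ j < 1)
    {p q : List (Fin N)} (h : p <+: q) : rWord ρ q ≤ rWord ρ p := by
  obtain ⟨t, rfl⟩ := h
  rw [rWord_append]
  calc rWord ρ p * rWord ρ t ≤ rWord ρ p * 1 :=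
        mul_le_mul_of_nonneg_left (rWord_le_one hρ0 hρ1 t) (rWord_pos hρ0 p).le
  _ = rWord ρ p := mul_one _

lemma mem_Jlevel_zero {ρ : Fin N → ℝ} {r : ℝ} {x : List (Fin N)} :
    x ∈ Jlevel ρ r 0 ↔ x = [] := by
  simp [Jlevel]

lemma mem_Jlevel_pos {ρ : Fin N → ℝ} {r : ℝ} {n : ℕ} (hn : n ≠ 0) {x : List (Fin N)} :
    x ∈ Jlevel ρ r n ↔ rWord ρ x ≤ r ^ n ∧ r ^ n < rWord ρ x.dropLast := by
  simp [Jlevel, hn]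

lemma mem_Jlevel_le {ρ : Fin N → ℝ} {r : ℝ} {n : ℕ} {x : List (Fin N)}
    (hx : x ∈ Jlevel ρ r n) : rWord ρ x ≤ r ^ n := by
  rcases Nat.eq_zero_or_pos n with rfl | hn
  · rw [mem_Jlevel_zero.1 hx]; norm_num [rWord_nil]
  · exact ((mem_Jlevel_pos (by omega)).1 hx).1

lemma Jlevel_disjoint {ρ : Fin N → ℝ} {r : ℝ} (hρ0 : ∀ j, 0 < ρ j)
    (h0 : 0 < r) (h1 : r < 1) (hrle : ∀ j, r ≤ ρ j)
    {m n : ℕ} {x : List (Fin N)} (hmn : m < n)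
    (hm : x ∈ Jlevel ρ r m) (hn : x ∈ Jlevel ρ r n) : False := by
  have hrn : rWord ρ x ≤ r ^ n := mem_Jlevel_le hn
  rcases Nat.eq_zero_or_pos m with rfl | hm0
  · have hx : x = [] := mem_Jlevel_zero.1 hm
    subst hx
    rw [rWord_nil] at hrn
    have : r ^ n < 1 := pow_lt_one₀ h0.le h1 (by omega)
    linarith
  · obtain ⟨hx1, hx2⟩ := (mem_Jlevel_pos (by omega)).1 hm
    have hxne : x ≠ [] := by
      rintro rfl
      rw [rWord_nil] at hx1
      have : r ^ m < 1 := pow_lt_one₀ h0.le h1 (by omega)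
      linarith
    have hsplit : x.dropLast ++ [x.getLast hxne] = x := List.dropLast_append_getLast hxne
    have heq : rWord ρ x = rWord ρ x.dropLast * ρ (x.getLast hxne) := by
      conv_lhs => rw [← hsplit]
      rw [rWord_append, rWord_cons, rWord_nil, mul_one]
    have h2 : r ^ m * r < rWord ρ x := by
      rw [heq]
      calc r ^ m * r < rWord ρ x.dropLast * r := by
            exact mul_lt_mul_of_pos_right hx2 h0
      _ ≤ rWord ρ x.dropLast * ρ (x.getLast hxne) :=
            mul_le_mul_of_nonneg_left (hrle _) (rWord_pos hρ0 _).le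
    have h3 : r ^ n ≤ r ^ (m + 1) := pow_le_pow_of_le_one h0.le h1.le (by omega)
    rw [pow_succ] at h3
    linarith

lemma prefix_of_levels {ρ : Fin N → ℝ} {r : ℝ} (hρ0 : ∀ j, 0 < ρ j) (hρ1 : ∀ j, ρ j < 1)
    (h0 : 0 < r) (h1 : r < 1)
    {m n : ℕ} {p q y : List (Fin N)} (hmn : m ≤ n)
    (hp : p ∈ Jlevel ρ r m) (hq : q ∈ Jlevel ρ r n)
    (hpy : p <+: y) (hqy : q <+: y) : p <+: q := by
  rcases Nat.eq_zero_or_pos m with rfl | hm0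
  · rw [mem_Jlevel_zero.1 hp]; exact List.nil_prefix
  rcases List.prefix_or_prefix_of_prefix hpy hqy with h | h
  · exact h
  · rcases eq_or_ne q p with rfl | hne
    · exact List.prefix_refl _
    obtain ⟨t, rfl⟩ := h
    have ht : t ≠ [] := by rintro rfl; simp at hne
    have hdl : (q ++ t).dropLast = q ++ t.dropLast := List.dropLast_append_of_ne_nil ht
    have h1' : rWord ρ (q ++ t).dropLast ≤ rWord ρ q := by
      rw [hdl]
      exact rWord_le_of_prefix hρ0 hρ1 ⟨t.dropLast, rfl⟩
    have hq1 : rWord ρ q ≤ r ^ n := mem_Jlevel_le hq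
    have hp2 : r ^ m < rWord ρ (q ++ t).dropLast := ((mem_Jlevel_pos (by omega)).1 hp).2
    have h3 : r ^ n ≤ r ^ m := pow_le_pow_of_le_one h0.le h1.le hmn
    linarith

lemma exists_prefix_aux {ρ : Fin N → ℝ} {r : ℝ} (hρ0 : ∀ j, 0 < ρ j)
    (h0 : 0 < r) (h1 : r < 1) {m : ℕ} (hm : m ≠ 0) :
    ∀ y : List (Fin N), rWord ρ y ≤ r ^ m → ∃ p, p ∈ Jlevel ρ r m ∧ p <+: y := by
  intro y
  induction y using List.reverseRecOn with
  | nil =>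
    intro h
    rw [rWord_nil] at h
    have : r ^ m < 1 := pow_lt_one₀ h0.le h1 hm
    linarith
  | append_singleton y j ih =>
    intro h
    by_cases hy : rWord ρ y ≤ r ^ m
    · obtain ⟨p, hp, hpre⟩ := ih hy
      exact ⟨p, hp, hpre.trans ⟨[j], rfl⟩⟩
    · refine ⟨y ++ [j], (mem_Jlevel_pos hm).2 ⟨h, ?_⟩, List.prefix_refl _⟩
      rw [List.dropLast_concat]
      linarith

lemma exists_prefix {ρ : Fin N → ℝ} {r : ℝ} (hρ0 : ∀ j, 0 < ρ j)
    (h0 : 0 < r) (h1 : r < 1) {m k : ℕ} {y : List (Fin N)}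
    (hy : y ∈ Jlevel ρ r (m + k)) : ∃ p, p ∈ Jlevel ρ r m ∧ p <+: y := by
  rcases Nat.eq_zero_or_pos m with rfl | hm0
  · exact ⟨[], mem_Jlevel_zero.2 rfl, List.nil_prefix⟩
  · have hle : rWord ρ y ≤ r ^ m :=
      le_trans (mem_Jlevel_le hy) (pow_le_pow_of_le_one h0.le h1.le (Nat.le_add_right m k))
    exact exists_prefix_aux hρ0 h0 h1 (by omega) y hle

lemma sWord_cons (S : Fin N → Euc d → Euc d) (i : Fin N) (w : List (Fin N)) :
    sWord S (i :: w) = S i ∘ sWord S w := rfl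

lemma sWord_append (S : Fin N → Euc d → Euc d) (a b : List (Fin N)) :
    sWord S (a ++ b) = sWord S a ∘ sWord S b := by
  induction a with
  | nil => rfl
  | cons i a ih =>
    show S i ∘ sWord S (a ++ b) = (S i ∘ sWord S a) ∘ sWord S b
    rw [ih]
    rfl

lemma sWord_image_subset (S : Fin N → Euc d → Euc d) {K : Set (Euc d)}
    (hKinv : K = ⋃ j, S j '' K) (w : List (Fin N)) : sWord S w '' K ⊆ K := by
  induction w with
  | nil => simp [sWord]
  | cons i w ih =>
    rw [sWord_cons, Set.image_comp]
    refine subset_trans (Set.image_mono ih) ?_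
    conv_rhs => rw [hKinv]
    exact Set.subset_iUnion (fun j => S j '' K) i

lemma sWord_mono (S : Fin N → Euc d → Euc d) {K : Set (Euc d)}
    (hKinv : K = ⋃ j, S j '' K) {p q : List (Fin N)} (h : p <+: q) :
    sWord S q '' K ⊆ sWord S p '' K := by
  obtain ⟨t, rfl⟩ := h
  rw [sWord_append, Set.image_comp]
  exact Set.image_mono (sWord_image_subset S hKinv t)

lemma ncard_biUnion_le' {α β : Type*} {c : ℕ} (f : β → Set α) {t : Set β} (ht : t.Finite) :
    (∀ x ∈ t, (f x).Finite ∧ (f x).ncard ≤ c) →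
    (⋃ x ∈ t, f x).Finite ∧ (⋃ x ∈ t, f x).ncard ≤ t.ncard * c := by
  refine Set.Finite.induction_on
    (motive := fun s _ => (∀ x ∈ s, (f x).Finite ∧ (f x).ncard ≤ c) →
      (⋃ x ∈ s, f x).Finite ∧ (⋃ x ∈ s, f x).ncard ≤ s.ncard * c) t ht ?_ ?_
  · intro _; simp
  · rintro a s has hs ih h
    have hfa := h a (Set.mem_insert _ _)
    have hrest := ih (fun x hx => h x (Set.mem_insert_of_mem _ hx))
    rw [Set.biUnion_insert]
    refine ⟨hfa.1.union hrest.1, ?_⟩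
    calc (f a ∪ ⋃ x ∈ s, f x).ncard ≤ (f a).ncard + (⋃ x ∈ s, f x).ncard :=
          Set.ncard_union_le _ _
    _ ≤ c + s.ncard * c := add_le_add hfa.2 hrest.2
    _ = (s.ncard + 1) * c := by ring
    _ = (insert a s).ncard * c := by rw [Set.ncard_insert_of_notMem has hs]

lemma desc_bound (S : Fin N → Euc d → Euc d) (ρ : Fin N → ℝ) {r κ : ℝ} (K : Set (Euc d))
    (hρ0 : ∀ j, 0 < ρ j) (hρ1 : ∀ j, ρ j < 1)
    (h0 : 0 < r) (h1 : r < 1) (hrle : ∀ j, r ≤ ρ j) {M : ℕ}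
    (hM : ∀ x, {y | (augIFS S ρ r κ K).Adj x y}.Finite ∧
      {y | (augIFS S ρ r κ K).Adj x y}.ncard ≤ M) :
    ∀ (k n : ℕ) (p : List (Fin N)), p ∈ Jlevel ρ r n →
      {y | y ∈ Jlevel ρ r (n + k) ∧ p <+: y}.Finite ∧
      {y | y ∈ Jlevel ρ r (n + k) ∧ p <+: y}.ncard ≤ (M + 1) ^ k := by
  intro k
  induction k with
  | zero =>
    intro n p hp
    have hsub : {y | y ∈ Jlevel ρ r (n + 0) ∧ p <+: y} ⊆ {p} := by
      rintro y ⟨hy, hpy⟩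
      have hy' : y ∈ Jlevel ρ r n := by simpa using hy
      have h2' : y <+: p :=
        prefix_of_levels hρ0 hρ1 h0 h1 le_rfl hy' hp (List.prefix_refl y) hpy
      exact Set.mem_singleton_iff.2 (h2'.sublist.antisymm hpy.sublist)
    refine ⟨(Set.finite_singleton p).subset hsub, ?_⟩
    calc _ ≤ ({p} : Set (List (Fin N))).ncard := Set.ncard_le_ncard hsub (Set.finite_singleton p)
    _ = 1 := Set.ncard_singleton p
    _ = (M + 1) ^ 0 := (pow_zero _).symm
  | succ k ih =>
    intro n p hp
    have hchild_sub : {c | c ∈ Jlevel ρ r (n + 1) ∧ p <+: c} ⊆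
        {y | (augIFS S ρ r κ K).Adj p y} := by
      rintro c ⟨hc, hpc⟩
      refine (⟨Or.inl ⟨n, hp, hc, hpc⟩, ?_⟩ : (EV ρ r p c ∨ _) ∧ _)
      rintro rfl
      exact Jlevel_disjoint hρ0 h0 h1 hrle (Nat.lt_succ_self n) hp hc
    have hchild_fin := (hM p).1.subset hchild_sub
    have hchild_card : {c | c ∈ Jlevel ρ r (n + 1) ∧ p <+: c}.ncard ≤ M + 1 :=
      le_trans (Set.ncard_le_ncard hchild_sub (hM p).1) (le_trans (hM p).2 (Nat.le_succ M))
    have hcover : {y | y ∈ Jlevel ρ r (n + (k + 1)) ∧ p <+: y} ⊆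
        ⋃ c ∈ {c | c ∈ Jlevel ρ r (n + 1) ∧ p <+: c},
          {y | y ∈ Jlevel ρ r ((n + 1) + k) ∧ c <+: y} := by
      rintro y ⟨hy, hpy⟩
      have hy' : y ∈ Jlevel ρ r ((n + 1) + k) := by
        rwa [show (n + 1) + k = n + (k + 1) by omega]
      obtain ⟨cc, hcc, hccy⟩ := exists_prefix hρ0 h0 h1 hy'
      have hpc : p <+: cc :=
        prefix_of_levels hρ0 hρ1 h0 h1 (Nat.le_succ n) hp hcc hpy hccy
      exact Set.mem_biUnion ⟨hcc, hpc⟩ ⟨hy', hccy⟩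
    obtain ⟨hfinU, hcardU⟩ :=
      ncard_biUnion_le' (fun c => {y | y ∈ Jlevel ρ r ((n + 1) + k) ∧ c <+: y})
        hchild_fin (fun c hc => ih (n + 1) c hc.1)
    refine ⟨hfinU.subset hcover, ?_⟩
    calc {y | y ∈ Jlevel ρ r (n + (k + 1)) ∧ p <+: y}.ncard ≤ _ :=
          Set.ncard_le_ncard hcover hfinU
    _ ≤ {c | c ∈ Jlevel ρ r (n + 1) ∧ p <+: c}.ncard * (M + 1) ^ k := hcardU
    _ ≤ (M + 1) * (M + 1) ^ k := Nat.mul_le_mul_right _ hchild_card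
    _ = (M + 1) ^ (k + 1) := by rw [pow_succ]; ring

end Auxiliary

/-- If the augmented tree of an IFS of contractive similitudes is of bounded
degree, then for every `c > 0` there is `ℓ > 0` such that any ball of radius
`c rⁿ` meets at most `ℓ` of the cells `K_x`, `x ∈ 𝓙_n`. -/
theorem bounded_degree_implies_finite_overlap {d N : ℕ} (hN : 2 ≤ N)
    (S : Fin N → Euc d → Euc d) (ρ : Fin N → ℝ) (r κ : ℝ) (K : Set (Euc d))
    (hρ0 : ∀ j, 0 < ρ j) (hρ1 : ∀ j, ρ j < 1)
    (hsim : ∀ j a b, dist (S j a) (S j b) = ρ j * dist a b)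
    (hr : IsLeast (Set.range ρ) r) (hκ : 0 < κ)
    (hKc : IsCompact K) (hKne : K.Nonempty) (hKinv : K = ⋃ j, S j '' K)
    (hbd : BddDeg (augIFS S ρ r κ K)) :
    ∀ c : ℝ, 0 < c → ∃ ℓ : ℕ, 0 < ℓ ∧ ∀ (n : ℕ) (z : Euc d),
      {x : List (Fin N) | x ∈ Jlevel ρ r n ∧
        ((sWord S x '' K) ∩ Metric.closedBall z (c * r ^ n)).Nonempty}.Finite ∧
      {x : List (Fin N) | x ∈ Jlevel ρ r n ∧
        ((sWord S x '' K) ∩ Metric.closedBall z (c * r ^ n)).Nonempty}.ncard ≤ ℓ := by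
  intro c hc
  obtain ⟨M, hM⟩ := hbd
  obtain ⟨j₀, hj₀⟩ := hr.1
  have h0 : 0 < r := hj₀ ▸ hρ0 j₀
  have h1 : r < 1 := hj₀ ▸ hρ1 j₀
  have hrle : ∀ j, r ≤ ρ j := fun j => hr.2 ⟨j, rfl⟩
  obtain ⟨m, hm⟩ := exists_pow_lt_of_lt_one (div_pos hκ (by linarith : (0:ℝ) < 2 * c)) h1
  refine ⟨(M + 1) ^ (m + 1), pow_pos (Nat.succ_pos M) _, ?_⟩
  intro n z
  set A := {x : List (Fin N) | x ∈ Jlevel ρ r n ∧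
    ((sWord S x '' K) ∩ Metric.closedBall z (c * r ^ n)).Nonempty} with hA
  set k := n - m with hk
  have hkn : k + (n - k) = n := by omega
  set A' := {p : List (Fin N) | p ∈ Jlevel ρ r k ∧
    ((sWord S p '' K) ∩ Metric.closedBall z (c * r ^ n)).Nonempty} with hA'
  have hcover : A ⊆ ⋃ p ∈ A', {y | y ∈ Jlevel ρ r (k + (n - k)) ∧ p <+: y} := by
    rintro x ⟨hx, hne⟩
    have hx' : x ∈ Jlevel ρ r (k + (n - k)) := by rwa [hkn]
    obtain ⟨p, hp, hpx⟩ := exists_prefix hρ0 h0 h1 hx'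
    refine Set.mem_biUnion (⟨hp, ?_⟩ : p ∈ A') ⟨hx', hpx⟩
    exact hne.mono (Set.inter_subset_inter_left _ (sWord_mono S hKinv hpx))
  rcases Set.eq_empty_or_nonempty A' with hE | ⟨a₀, ha₀⟩
  · have hAe : A = ∅ := by
      rw [hE] at hcover
      simpa using Set.subset_empty_iff.1 (by simpa using hcover)
    rw [hAe]
    simp
  · have hadj : ∀ b ∈ A', b ≠ a₀ → (augIFS S ρ r κ K).Adj a₀ b := by
      intro b hb hbne
      have hkm : m ≤ n := by
        by_contra hmn
        have hk0 : k = 0 := by omega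
        obtain ⟨hb1, -⟩ := hb
        obtain ⟨ha1, -⟩ := ha₀
        rw [hk0] at hb1 ha1
        exact hbne ((mem_Jlevel_zero.1 hb1).trans (mem_Jlevel_zero.1 ha1).symm)
      obtain ⟨u, huK, huB⟩ := ha₀.2
      obtain ⟨v, hvK, hvB⟩ := hb.2
      have huB' : dist u z ≤ c * r ^ n := Metric.mem_closedBall.1 huB
      have hvB' : dist v z ≤ c * r ^ n := Metric.mem_closedBall.1 hvB
      have hdist : dist u v ≤ 2 * c * r ^ n := by
        calc dist u v ≤ dist u z + dist z v := dist_triangle _ _ _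
        _ ≤ c * r ^ n + c * r ^ n := add_le_add huB' (by rwa [dist_comm])
        _ = 2 * c * r ^ n := by ring
      have hset : setDist (sWord S a₀ '' K) (sWord S b '' K) ≤ κ * r ^ k := by
        have hmem : dist u v ∈ Set.image2 dist (sWord S a₀ '' K) (sWord S b '' K) :=
          Set.mem_image2.2 ⟨u, huK, v, hvK, rfl⟩
        have hbdd : BddBelow (Set.image2 dist (sWord S a₀ '' K) (sWord S b '' K)) := by
          refine ⟨0, ?_⟩
          rintro w ⟨u', _, v', _, rfl⟩
          exact dist_nonneg
        have h5 : setDist (sWord S a₀ '' K) (sWord S b '' K) ≤ dist u v :=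
          csInf_le hbdd hmem
        have h6 : 2 * c * r ^ n ≤ κ * r ^ k := by
          have hpow : r ^ n = r ^ k * r ^ m := by
            rw [← pow_add]
            congr 1
            omega
          rw [hpow, show 2 * c * (r ^ k * r ^ m) = (2 * c * r ^ m) * r ^ k by ring]
          refine mul_le_mul_of_nonneg_right ?_ (pow_nonneg h0.le k)
          have := (lt_div_iff₀ (by linarith : (0:ℝ) < 2 * c)).1 hm
          linarith
        linarith
      exact (⟨Or.inr (Or.inr (Or.inl ⟨k, ha₀.1, hb.1, hbne.symm, hset⟩)), hbne.symm⟩ :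
        (_ ∨ _ ∨ EH S ρ r κ K a₀ b ∨ _) ∧ _)
    have hA'sub : A' ⊆ insert a₀ {y | (augIFS S ρ r κ K).Adj a₀ y} := by
      intro b hb
      rcases eq_or_ne b a₀ with rfl | hne
      · exact Set.mem_insert _ _
      · exact Set.mem_insert_of_mem _ (hadj b hb hne)
    have hfinA' : A'.Finite := ((hM a₀).1.insert a₀).subset hA'sub
    have hcardA' : A'.ncard ≤ M + 1 := by
      have := Set.ncard_le_ncard hA'sub ((hM a₀).1.insert a₀)
      have h7 := Set.ncard_insert_le a₀ {y | (augIFS S ρ r κ K).Adj a₀ y}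
      have h8 := (hM a₀).2
      omega
    obtain ⟨hfinU, hcardU⟩ :=
      ncard_biUnion_le' (fun p => {y | y ∈ Jlevel ρ r (k + (n - k)) ∧ p <+: y}) hfinA'
        (fun p hp => desc_bound S ρ K hρ0 hρ1 h0 h1 hrle hM (n - k) k p hp.1)
    refine ⟨hfinU.subset hcover, ?_⟩
    calc A.ncard ≤ _ := Set.ncard_le_ncard hcover hfinU
    _ ≤ A'.ncard * (M + 1) ^ (n - k) := hcardU
    _ ≤ (M + 1) * (M + 1) ^ m :=
        Nat.mul_le_mul hcardA' (Nat.pow_le_pow_right (Nat.succ_pos M) (by omega))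
    _ = (M + 1) ^ (m + 1) := by rw [pow_succ']


end HypIFS
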